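/- arXiv:1801.02359 — 2 statements merged into one kernel-verified Lean document; each statement's English description precedes it below -/
import Mathlib

section
/- For odd n and every real x, ∫_{−∞}^x e^{−t²/2} H_n(t) dt = −2 ∑_{i=0}^{(n−1)/2} (2^i (n−1)!!/(n−1−2i)!!) e^{−x²/2} H_{n−1−2i}(x). -/
open Real MeasureTheory

/-- Physicists' Hermite polynomial `H n x = (-1)^n e^{x^2} (d/dx)^n e^{-x^2}`. -/
noncomputable def physHermite (n : ℕ) (x : ℝ) : ℝ :=
  (-1)^n * Real.exp (x^2) * iteratedDeriv n (fun y => Real.exp (-y^2)) x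

/-- Hermite function `φ k x = (2^k k! √π)^{-1/2} H_k(x) e^{-x²/2}`. -/
noncomputable def hermiteFn (k : ℕ) (x : ℝ) : ℝ :=
  (Real.sqrt (2^k * k.factorial * Real.sqrt Real.pi))⁻¹ * physHermite k x * Real.exp (-x^2/2)

/-- Confluent hypergeometric function `₁F₁(-k; b; x)` with nonpositive integer first
parameter `-k`; it is the polynomial `∑_{j=0}^{k} ((-k)_j/(b)_j) x^j/j!`, where the rising
factorial `(-k)_j = (-1)^j k!/(k-j)!`. -/
noncomputable def oneF1neg (k : ℕ) (b x : ℝ) : ℝ :=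
  ∑ j ∈ Finset.range (k+1),
    ((-1)^j * (k.descFactorial j : ℝ) / ∏ i ∈ Finset.range j, (b + i)) * x^j / (j.factorial : ℝ)

/-- GUE mean density at σ² = 1/2: partial sum of squared Hermite functions. -/
noncomputable def pGUE (n : ℕ) (x : ℝ) : ℝ := ∑ k ∈ Finset.range n, hermiteFn k x ^ 2

/-- GUE mean density with general variance σ². -/
noncomputable def pGUEvar (n : ℕ) (σ x : ℝ) : ℝ :=
  (σ * Real.sqrt 2)⁻¹ * pGUE n (x / (σ * Real.sqrt 2))

/-- The function τₙ from the GSE/GOE densities. -/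
noncomputable def tauFn (n : ℕ) (x : ℝ) : ℝ :=
  Real.sqrt (n/2) * hermiteFn (n-1) x *
    ((1/2) * ∫ t : ℝ, Real.sign (x - t) * hermiteFn n t)

/-- The function αₙ (for odd n) from the GOE density. -/
noncomputable def alphaFn (n : ℕ) (x : ℝ) : ℝ :=
  hermiteFn (n-1) x / ∫ t : ℝ, hermiteFn (n-1) t

section
open Polynomial Filter

noncomputable def PH : ℕ → Polynomial ℝ
  | 0 => 1
  | n+1 => Polynomial.C 2 * Polynomial.X * PH n - Polynomial.derivative (PH n)

lemma PH_succ (n : ℕ) : PH (n+1) = Polynomial.C 2 * Polynomial.X * PH n - Polynomial.derivative (PH n) := rfl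

lemma PH_deriv (n : ℕ) : (PH (n+1)).derivative = Polynomial.C (2*(n+1) : ℝ) * PH n := by
  induction n with
  | zero =>
    simp [PH_succ, PH]
  | succ n ih =>
    rw [PH_succ (n+1), derivative_sub, derivative_mul, derivative_mul, ih, PH_succ n]
    apply Polynomial.funext
    intro y
    simp only [derivative_C, derivative_X, derivative_sub, derivative_mul, eval_add, eval_sub,
      eval_mul, eval_C, eval_X, eval_zero, eval_one, zero_mul, one_mul, zero_add]
    push_cast
    ring

lemma integrable_pow_gauss (i : ℕ) : Integrable (fun t : ℝ => t^i * Real.exp (-(1/2) * t^2)) := by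
  have := integrable_rpow_mul_exp_neg_mul_sq (b := 1/2) (by norm_num) (s := i) (lt_of_lt_of_le neg_one_lt_zero (Nat.cast_nonneg i))
  simpa [Real.rpow_natCast] using this

lemma integrable_gauss_poly (P : Polynomial ℝ) :
    Integrable (fun t : ℝ => Real.exp (-t^2/2) * P.eval t) := by
  have h : (fun t : ℝ => Real.exp (-t^2/2) * P.eval t) =
      fun t => ∑ i ∈ Finset.range (P.natDegree + 1), P.coeff i * (t^i * Real.exp (-(1/2) * t^2)) := by
    funext t
    rw [Polynomial.eval_eq_sum_range, Finset.mul_sum]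
    congr 1; funext i; ring_nf
  rw [h]
  exact integrable_finset_sum _ (fun i _ => (integrable_pow_gauss i).const_mul _)

lemma tendsto_pow_gauss_atTop (i : ℕ) :
    Tendsto (fun t : ℝ => t^i * Real.exp (-t^2/2)) atTop (nhds 0) := by
  apply squeeze_zero' (g := fun t : ℝ => t^i * Real.exp (-t))
  · filter_upwards [eventually_ge_atTop (0:ℝ)] with t ht
    positivity
  · filter_upwards [eventually_ge_atTop (2:ℝ)] with t ht
    have h1 : t ≤ t^2/2 := by nlinarith
    exact mul_le_mul_of_nonneg_left (Real.exp_le_exp.2 (by linarith)) (by positivity)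
  · exact tendsto_pow_mul_exp_neg_atTop_nhds_zero i

lemma tendsto_pow_gauss_atBot (i : ℕ) :
    Tendsto (fun t : ℝ => t^i * Real.exp (-t^2/2)) atBot (nhds 0) := by
  have h := ((tendsto_pow_gauss_atTop i).comp tendsto_neg_atBot_atTop).const_mul ((-1:ℝ)^i)
  rw [mul_zero] at h
  refine h.congr (fun t => ?_)
  simp only [Function.comp_apply]
  rw [show ((-t)^2 : ℝ) = t^2 by ring, ← mul_assoc, ← mul_pow]
  norm_num

lemma tendsto_gauss_poly_atBot (P : Polynomial ℝ) :
    Tendsto (fun t : ℝ => Real.exp (-t^2/2) * P.eval t) atBot (nhds 0) := by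
  have h : (fun t : ℝ => Real.exp (-t^2/2) * P.eval t) =
      fun t => ∑ i ∈ Finset.range (P.natDegree + 1), P.coeff i * (t^i * Real.exp (-t^2/2)) := by
    funext t
    rw [Polynomial.eval_eq_sum_range, Finset.mul_sum]
    congr 1; funext i; ring
  rw [h]
  have : (0:ℝ) = ∑ i ∈ Finset.range (P.natDegree + 1), P.coeff i * 0 := by simp
  rw [this]
  exact tendsto_finset_sum _ (fun i _ => ((tendsto_pow_gauss_atBot i).const_mul _))

lemma ftc_gauss_poly (P : Polynomial ℝ) (x : ℝ) :
    ∫ t in Set.Iic x, Real.exp (-t^2/2) * (P.derivative - Polynomial.X * P).eval t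
      = Real.exp (-x^2/2) * P.eval x := by
  have key := MeasureTheory.integral_Iic_of_hasDerivAt_of_tendsto'
    (f := fun t : ℝ => Real.exp (-t^2/2) * P.eval t)
    (f' := fun t : ℝ => Real.exp (-t^2/2) * (P.derivative - Polynomial.X * P).eval t)
    (a := x) (m := 0) ?_ ?_ ?_
  · rw [key, sub_zero]
  · intro t _
    have h0 : HasDerivAt (fun t : ℝ => -t^2/2) (-t) t := by
      have := ((hasDerivAt_pow 2 t).fun_neg.div_const 2)
      refine this.congr_deriv ?_
      norm_num; ring
    have h1 : HasDerivAt (fun t : ℝ => Real.exp (-t^2/2)) (Real.exp (-t^2/2) * (-t)) t := h0.exp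
    have h2 := h1.fun_mul (P.hasDerivAt t)
    refine h2.congr_deriv ?_
    simp only [eval_sub, eval_mul, eval_X]
    ring
  · exact (integrable_gauss_poly _).integrableOn
  · exact tendsto_gauss_poly_atBot P

lemma eval_rec (k : ℕ) (t : ℝ) :
    Real.exp (-t^2/2) * (PH (k+2)).eval t
      = (2*(k+1)) * (Real.exp (-t^2/2) * (PH k).eval t)
        - 2 * (Real.exp (-t^2/2) * ((PH (k+1)).derivative - Polynomial.X * PH (k+1)).eval t) := by
  rw [PH_succ (k+1)]
  simp only [PH_deriv, eval_sub, eval_mul, eval_C, eval_X]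
  push_cast
  ring

lemma key (m : ℕ) (x : ℝ) :
    ∫ t in Set.Iic x, Real.exp (-t^2/2) * (PH (2*m+1)).eval t
      = -2 * ∑ i ∈ Finset.range (m+1),
          (2^i * ((2*m).doubleFactorial : ℝ) / (((2*m-2*i).doubleFactorial : ℝ))) *
            Real.exp (-x^2/2) * (PH (2*m-2*i)).eval x := by
  induction m generalizing x with
  | zero =>
    have h : ∀ t : ℝ, Real.exp (-t^2/2) * (PH 1).eval t
        = -2 * (Real.exp (-t^2/2) * ((PH 0).derivative - Polynomial.X * PH 0).eval t) := by
      intro t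
      simp only [PH_succ, PH, eval_sub, eval_mul, eval_C, eval_X, derivative_one, eval_zero,
        eval_one]
      ring
    simp only [h]
    rw [MeasureTheory.integral_const_mul, ftc_gauss_poly]
    simp [PH, Nat.doubleFactorial]
  | succ m ih =>
    have h1 : Integrable fun t : ℝ => Real.exp (-t^2/2) * (PH (2*m+1)).eval t :=
      integrable_gauss_poly _
    have h2 : Integrable fun t : ℝ =>
        Real.exp (-t^2/2) * ((PH (2*m+2)).derivative - Polynomial.X * PH (2*m+2)).eval t :=
      integrable_gauss_poly _
    have heq : ∀ t : ℝ, Real.exp (-t^2/2) * (PH (2*(m+1)+1)).eval t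
        = (2*(2*m+1+1)) * (Real.exp (-t^2/2) * (PH (2*m+1)).eval t)
          - 2 * (Real.exp (-t^2/2) *
              ((PH (2*m+1+1)).derivative - Polynomial.X * PH (2*m+1+1)).eval t) := by
      intro t
      have := eval_rec (2*m+1) t
      convert this using 4 <;> push_cast <;> ring_nf
    simp only [heq]
    rw [MeasureTheory.integral_sub (h1.const_mul _).integrableOn (h2.const_mul _).integrableOn,
      MeasureTheory.integral_const_mul, MeasureTheory.integral_const_mul, ih, ftc_gauss_poly]
    conv_rhs => rw [Finset.sum_range_succ']
    have hterm : ∀ i ∈ Finset.range (m+1),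
        (2^(i+1) * ((2*(m+1)).doubleFactorial : ℝ) / (((2*(m+1)-2*(i+1)).doubleFactorial : ℝ))) *
            Real.exp (-x^2/2) * (PH (2*(m+1)-2*(i+1))).eval x
        = (2*(2*m+1+1) : ℝ) * ((2^i * ((2*m).doubleFactorial : ℝ) /
            (((2*m-2*i).doubleFactorial : ℝ))) * Real.exp (-x^2/2) * (PH (2*m-2*i)).eval x) := by
      intro i _
      have hidx : 2*(m+1)-2*(i+1) = 2*m-2*i := by omega
      have hdf : (2*(m+1)).doubleFactorial = (2*m+2) * (2*m).doubleFactorial := by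
        rw [show 2*(m+1) = 2*m+2 by ring, Nat.doubleFactorial_add_two]
      rw [hidx, hdf]
      push_cast
      ring
    rw [Finset.sum_congr rfl hterm, ← Finset.mul_sum]
    have hd0 : ((2*(m+1)).doubleFactorial : ℝ) ≠ 0 :=
      Nat.cast_ne_zero.mpr (Nat.doubleFactorial_pos _).ne'
    have h00 : 2*(m+1)-2*0 = 2*(m+1) := by omega
    rw [h00, pow_zero, one_mul, div_self hd0]
    have hP : (PH (2*(m+1))).eval x = (PH (2*m+1+1)).eval x := by norm_num; ring_nf
    rw [hP]
    push_cast
    ring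

lemma hasDerivAt_gauss (x : ℝ) : HasDerivAt (fun y : ℝ => Real.exp (-y^2)) (Real.exp (-x^2) * (-(2*x))) x := by
  have h : HasDerivAt (fun y : ℝ => -y^2) (-(2*x)) x := by
    simpa using (hasDerivAt_pow 2 x).fun_neg
  exact h.exp

lemma iteratedDeriv_gauss (n : ℕ) (x : ℝ) :
    iteratedDeriv n (fun y => Real.exp (-y^2)) x = (-1)^n * (PH n).eval x * Real.exp (-x^2) := by
  induction n generalizing x with
  | zero => simp [show PH 0 = 1 from rfl]
  | succ n ih =>
    rw [iteratedDeriv_succ]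
    have hfun : iteratedDeriv n (fun y => Real.exp (-y^2)) =
        fun x => (-1:ℝ)^n * (PH n).eval x * Real.exp (-x^2) := funext ih
    rw [hfun]
    have hd : HasDerivAt (fun x : ℝ => (-1:ℝ)^n * (PH n).eval x * Real.exp (-x^2))
        (((-1:ℝ)^n * ((PH n).derivative.eval x)) * Real.exp (-x^2)
          + ((-1:ℝ)^n * (PH n).eval x) * (Real.exp (-x^2) * (-(2*x)))) x :=
      (((PH n).hasDerivAt x).const_mul ((-1:ℝ)^n)).mul (hasDerivAt_gauss x)
    rw [hd.deriv, PH_succ]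
    simp only [eval_sub, eval_mul, eval_C, eval_X, pow_succ]
    ring

lemma physHermite_eq (n : ℕ) (x : ℝ) : physHermite n x = (PH n).eval x := by
  rw [physHermite, iteratedDeriv_gauss]
  have h1 : ((-1:ℝ)^n) * ((-1:ℝ)^n) = 1 := by
    rw [← pow_add, ← two_mul, pow_mul]
    norm_num
  have h2 : Real.exp (x^2) * Real.exp (-x^2) = 1 := by
    rw [← Real.exp_add]
    simp
  calc (-1:ℝ)^n * Real.exp (x^2) * ((-1)^n * (PH n).eval x * Real.exp (-x^2))
      = (((-1:ℝ)^n) * ((-1:ℝ)^n)) * (Real.exp (x^2) * Real.exp (-x^2)) * (PH n).eval x := by ring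
    _ = (PH n).eval x := by rw [h1, h2]; ring

end

theorem integral_Iic_exp_hermite_odd (n : ℕ) (hn : Odd n) (x : ℝ) :
    ∫ t in Set.Iic x, Real.exp (-t^2/2) * physHermite n t =
      -2 * ∑ i ∈ Finset.range ((n-1)/2 + 1),
        (2^i * (Nat.doubleFactorial (n-1) : ℝ) / (Nat.doubleFactorial (n-1-2*i) : ℝ)) *
          Real.exp (-x^2/2) * physHermite (n-1-2*i) x := by
  obtain ⟨m, rfl⟩ := hn
  simp only [physHermite_eq]
  rw [show 2*m+1-1 = 2*m from by omega, show (2*m)/2 = m from by omega]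
  exact key m x
end

section
/- The GUE mean density p_u(x) = ∑_{k=0}^{n−1} φ_k(x)² satisfies the third-order differential equation (1/4) p_u'''(x) + (2n − x²) p_u'(x) + x p_u(x) = 0 for every real x. Equivalently, for general variance σ², p(x) = (σ√2)^{−1} ∑_{k=0}^{n−1} φ_k(x/(σ√2))² satisfies σ⁴ p''' + (4nσ² − x²) p' + x p = 0. -/
open Real MeasureTheory

lemma gauss_contDiff : ContDiff ℝ ⊤ (fun y : ℝ => Real.exp (-y^2)) :=
  Real.contDiff_exp.comp ((contDiff_id.pow 2).neg)

lemma gaussIter_hasDerivAt (n : ℕ) (x : ℝ) :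
    HasDerivAt (iteratedDeriv n (fun y : ℝ => Real.exp (-y^2)))
      (iteratedDeriv (n+1) (fun y : ℝ => Real.exp (-y^2)) x) x := by
  rw [iteratedDeriv_succ]
  exact ((gauss_contDiff.differentiable_iteratedDeriv n (by simp)) x).hasDerivAt

lemma physHermite_hasDerivAt (n : ℕ) (x : ℝ) :
    HasDerivAt (physHermite n) (2*x*physHermite n x - physHermite (n+1) x) x := by
  have h1 : HasDerivAt (fun y : ℝ => (-1:ℝ)^n * Real.exp (y^2))
      ((-1)^n * (Real.exp (x^2) * (2*x))) x := by
    have := ((hasDerivAt_pow 2 x).exp).const_mul ((-1:ℝ)^n)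
    simpa using this
  have h := h1.fun_mul (gaussIter_hasDerivAt n x)
  have heq : (fun y : ℝ => ((-1:ℝ)^n * Real.exp (y^2)) * iteratedDeriv n (fun y : ℝ => Real.exp (-y^2)) y) = physHermite n := by
    funext y; simp [physHermite, mul_assoc]
  rw [heq] at h
  convert h using 1
  · rfl
  · rfl
  simp [physHermite]
  ring

lemma physHermite_zero (x : ℝ) : physHermite 0 x = 1 := by
  simp [physHermite, ← Real.exp_add]

lemma physHermite_deriv (n : ℕ) :
    deriv (physHermite n) = fun x => 2*n*physHermite (n-1) x := by
  induction n using Nat.strong_induction_on with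
  | _ n ih =>
    match n with
    | 0 =>
      have h0 : physHermite 0 = fun _ : ℝ => (1:ℝ) := funext physHermite_zero
      rw [h0]
      simp [deriv_const]
    | 1 =>
      have hd0 : deriv (physHermite 0) = fun x => 2*(0:ℕ)*physHermite (0-1) x := ih 0 (by omega)
      have h1 : physHermite 1 = fun x : ℝ => 2*x := by
        funext y
        have := (physHermite_hasDerivAt 0 y).deriv
        rw [hd0] at this
        simp [physHermite_zero] at this ⊢
        linarith
      rw [h1]
      funext y
      simp [physHermite_zero]
    | (m+2) =>
      have ihm1 : deriv (physHermite (m+1)) = fun x => 2*(m+1)*physHermite m x := by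
        have := ih (m+1) (by omega); simpa using this
      have ihm : deriv (physHermite m) = fun x => 2*m*physHermite (m-1) x := ih m (by omega)
      have hd : ∀ (k : ℕ), k ≤ m+1 → ∀ y : ℝ, HasDerivAt (physHermite k) (2*k*physHermite (k-1) y) y := by
        intro k hk y
        have h := (physHermite_hasDerivAt k y).differentiableAt.hasDerivAt
        rwa [ih k (by omega)] at h
      have e1 : physHermite (m+2) = fun x => 2*x*physHermite (m+1) x - (2*(m+1))*physHermite m x := by
        funext y
        have h := (physHermite_hasDerivAt (m+1) y).deriv
        rw [ihm1] at h
        simp only at h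
        push_cast
        linarith
      have key : ∀ y : ℝ, HasDerivAt (physHermite (m+2)) (2*(m+2)*physHermite (m+1) y) y := by
        intro y
        rw [e1]
        have h := (((hasDerivAt_id y).const_mul (2:ℝ)).fun_mul (hd (m+1) (by omega) y)).fun_sub
          ((hd m (by omega) y).const_mul ((2:ℝ)*(m+1)))
        convert h using 1
        · rfl
        · rfl
        · rfl
        have e0 : physHermite (m+1) y = 2*y*physHermite m y - 2*m*physHermite (m-1) y := by
          have h2 := (physHermite_hasDerivAt m y).deriv
          rw [ihm] at h2
          simp only at h2
          linarith
        simp only [Nat.add_sub_cancel, id_eq]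
        push_cast
        nlinarith [e0]
      funext y
      rw [(key y).deriv]
      simp






lemma physHermite_hasDerivAt' (n : ℕ) (x : ℝ) :
    HasDerivAt (physHermite n) (2*n*physHermite (n-1) x) x := by
  have h := (physHermite_hasDerivAt n x).differentiableAt.hasDerivAt
  rwa [physHermite_deriv n] at h

lemma physHermite_threeterm (n : ℕ) (x : ℝ) :
    physHermite (n+1) x = 2*x*physHermite n x - 2*n*physHermite (n-1) x := by
  have h := (physHermite_hasDerivAt n x).deriv
  rw [physHermite_deriv n] at h
  simp only at h
  linarith

noncomputable def CC (k : ℕ) : ℝ := (Real.sqrt (2^k * k.factorial * Real.sqrt Real.pi))⁻¹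

noncomputable def aa (k : ℕ) : ℝ := Real.sqrt (k/2)

lemma aa_sq (k : ℕ) : aa k ^ 2 = k/2 := by
  rw [aa, sq_sqrt]; positivity

lemma aa_zero : aa 0 = 0 := by simp [aa]

lemma CC_pos (k : ℕ) : 0 < CC k := by
  rw [CC]
  have h : (0:ℝ) < Real.sqrt Real.pi := Real.sqrt_pos.mpr Real.pi_pos
  have : (0:ℝ) < 2^k * k.factorial * Real.sqrt Real.pi := by positivity
  positivity

lemma key1 (k : ℕ) : aa (k+1) * CC (k+1) = (1/2) * CC k := by
  have h1 : ((2:ℝ)^(k+1) * (k+1).factorial * Real.sqrt Real.pi)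
      = (2*((k:ℝ)+1)) * (2^k * k.factorial * Real.sqrt Real.pi) := by
    rw [Nat.factorial_succ]; push_cast; ring
  rw [CC, CC, h1, Real.sqrt_mul (by positivity)]
  set s := Real.sqrt (2^k * (k.factorial:ℝ) * Real.sqrt Real.pi) with hs
  set t := Real.sqrt (2*((k:ℝ)+1)) with htdef
  have h3 : (0:ℝ) < t := Real.sqrt_pos.mpr (by positivity)
  have ht2 : t^2 = 2*((k:ℝ)+1) := Real.sq_sqrt (by positivity)
  have h2 : aa (k+1) * t = ((k:ℝ)+1) := by
    rw [aa, htdef, ← Real.sqrt_mul (by positivity)]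
    push_cast
    rw [show ((k:ℝ)+1)/2 * (2*((k:ℝ)+1)) = ((k:ℝ)+1)^2 by ring]
    exact Real.sqrt_sq (by positivity)
  have haat : aa (k+1) * t = (t/2) * t := by linear_combination h2 - ht2/2
  have haa : aa (k+1) = t/2 := mul_right_cancel₀ h3.ne' haat
  rw [mul_inv, haa]
  field_simp

lemma key2 (k : ℕ) : aa k * CC (k-1) = k * CC k := by
  cases k with
  | zero => simp [aa_zero]
  | succ j =>
    have h := key1 j
    have hsq := aa_sq (j+1)
    push_cast at hsq
    simp only [Nat.add_sub_cancel]
    push_cast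
    linear_combination (-2*aa (j+1))*h + 2*CC (j+1)*hsq






lemma hermiteFn_eq (j : ℕ) (x : ℝ) :
    hermiteFn j x = CC j * physHermite j x * Real.exp (-x^2/2) := rfl

lemma xF (k : ℕ) (x : ℝ) : x * hermiteFn k x
    = aa k * hermiteFn (k-1) x + aa (k+1) * hermiteFn (k+1) x := by
  simp only [hermiteFn_eq]
  have k1 := key1 k
  have k2 := key2 k
  have tt := physHermite_threeterm k x
  linear_combination (-(physHermite (k-1) x * Real.exp (-x^2/2)))*k2
    + (-(physHermite (k+1) x * Real.exp (-x^2/2)))*k1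
    + (-(1/2)*CC k*Real.exp (-x^2/2))*tt

lemma hermiteFn_hasDerivAt (k : ℕ) (x : ℝ) :
    HasDerivAt (hermiteFn k) (aa k * hermiteFn (k-1) x - aa (k+1) * hermiteFn (k+1) x) x := by
  have inner : HasDerivAt (fun y : ℝ => -y^2/2) (-x) x := by
    have h := (hasDerivAt_pow 2 x).fun_neg.div_const 2
    convert h using 1
    · rfl
    · rfl
    ring
  have hE := inner.exp
  have hH := (physHermite_hasDerivAt' k x).const_mul (CC k)
  have h := hH.fun_mul hE
  have heq : (fun y : ℝ => CC k * physHermite k y * Real.exp (-y^2/2)) = hermiteFn k := by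
    funext y; rw [hermiteFn_eq]
  rw [heq] at h
  convert h using 1
  · rfl
  · rfl
  simp only [hermiteFn_eq]
  have k1 := key1 k
  have k2 := key2 k
  have tt := physHermite_threeterm k x
  linear_combination (physHermite (k-1) x * Real.exp (-x^2/2))*k2
    + (-(physHermite (k+1) x * Real.exp (-x^2/2)))*k1
    + (-(1/2)*CC k*Real.exp (-x^2/2))*tt







noncomputable def dH (k : ℕ) (x : ℝ) : ℝ :=
  aa k * hermiteFn (k-1) x - aa (k+1) * hermiteFn (k+1) x


lemma hermiteFn_hasDerivAt' (k : ℕ) (x : ℝ) :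
    HasDerivAt (hermiteFn k) (dH k x) x := hermiteFn_hasDerivAt k x

lemma dH_hasDerivAt (k : ℕ) (x : ℝ) :
    HasDerivAt (dH k) ((x^2 - (2*k+1)) * hermiteFn k x) x := by
  have h := ((hermiteFn_hasDerivAt' (k-1) x).const_mul (aa k)).fun_sub
    ((hermiteFn_hasDerivAt' (k+1) x).const_mul (aa (k+1)))
  have heq : (fun y : ℝ => aa k * hermiteFn (k-1) y - aa (k+1) * hermiteFn (k+1) y) = dH k := rfl
  rw [heq] at h
  convert h using 1
  · rfl
  · rfl
  simp only [dH]
  cases k with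
  | zero =>
    have e0 := xF 0 x
    have e1 := xF 1 x
    have s := aa_sq 1
    rw [aa_zero] at e0 ⊢
    push_cast at s ⊢
    simp only [Nat.sub_self, Nat.zero_sub, Nat.add_sub_cancel] at *
    linear_combination x*e0 + aa 1*e1 + 2*hermiteFn 0 x*s
  | succ j =>
    have e1 := xF j x
    have e2 := xF (j+1) x
    have e3 := xF (j+2) x
    have s1 := aa_sq (j+1)
    have s2 := aa_sq (j+2)
    push_cast at s1 s2 ⊢
    simp only [Nat.add_sub_cancel, show j+2-1 = j+1 from rfl] at *
    linear_combination aa (j+1)*e1 + x*e2 + aa (j+2)*e3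
      + 2*hermiteFn (j+1) x*s1 + 2*hermiteFn (j+1) x*s2

noncomputable def Q1 (k : ℕ) (x : ℝ) : ℝ := 2 * hermiteFn k x * dH k x
noncomputable def Q2 (k : ℕ) (x : ℝ) : ℝ :=
  2 * dH k x^2 + 2*(x^2-(2*k+1)) * hermiteFn k x^2
noncomputable def Q3 (k : ℕ) (x : ℝ) : ℝ :=
  8*(x^2-(2*k+1)) * hermiteFn k x * dH k x + 4*x*hermiteFn k x^2

lemma hQ1 (k : ℕ) (x : ℝ) : HasDerivAt (fun y => hermiteFn k y^2) (Q1 k x) x := by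
  have h := (hermiteFn_hasDerivAt' k x).fun_mul (hermiteFn_hasDerivAt' k x)
  convert h using 1
  · rfl
  · rfl
  · funext y; ring
  · simp only [Q1]; ring

lemma hQ2 (k : ℕ) (x : ℝ) : HasDerivAt (Q1 k) (Q2 k x) x := by
  have h := ((hermiteFn_hasDerivAt' k x).const_mul (2:ℝ)).fun_mul (dH_hasDerivAt k x)
  convert h using 1
  · rfl
  · rfl
  · rfl
  simp only [Q2]; ring

lemma hQ3 (k : ℕ) (x : ℝ) : HasDerivAt (Q2 k) (Q3 k x) x := by
  have h1 := ((dH_hasDerivAt k x).fun_mul (dH_hasDerivAt k x)).const_mul (2:ℝ)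
  have hsq : HasDerivAt (fun y : ℝ => y^2 - (2*(k:ℝ)+1)) (2*x) x := by
    have := (hasDerivAt_pow 2 x).sub_const (2*(k:ℝ)+1)
    convert this using 1
    · rfl
    · rfl
    ring
  have h2 := ((hsq.const_mul (2:ℝ)).fun_mul ((hermiteFn_hasDerivAt' k x).fun_mul (hermiteFn_hasDerivAt' k x)))
  have h := h1.fun_add h2
  convert h using 1
  · rfl
  · rfl
  · funext y; simp only [Q2]; ring
  · simp only [Q3]; ring

noncomputable def PP1 (n : ℕ) (x : ℝ) : ℝ := ∑ k ∈ Finset.range n, Q1 k x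
noncomputable def PP2 (n : ℕ) (x : ℝ) : ℝ := ∑ k ∈ Finset.range n, Q2 k x
noncomputable def PP3 (n : ℕ) (x : ℝ) : ℝ := ∑ k ∈ Finset.range n, Q3 k x

lemma hP0 (n : ℕ) (x : ℝ) : HasDerivAt (pGUE n) (PP1 n x) x := by
  have h := HasDerivAt.fun_sum (fun k (_ : k ∈ Finset.range n) => hQ1 k x)
  exact h

lemma hP1 (n : ℕ) (x : ℝ) : HasDerivAt (PP1 n) (PP2 n x) x :=
  HasDerivAt.fun_sum (fun k _ => hQ2 k x)

lemma hP2 (n : ℕ) (x : ℝ) : HasDerivAt (PP2 n) (PP3 n x) x :=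
  HasDerivAt.fun_sum (fun k _ => hQ3 k x)

lemma deriv_pGUE (n : ℕ) : deriv (pGUE n) = PP1 n := funext fun x => (hP0 n x).deriv

lemma iteratedDeriv3_pGUE (n : ℕ) : iteratedDeriv 3 (pGUE n) = PP3 n := by
  rw [show (3:ℕ) = 2+1 from rfl, iteratedDeriv_succ, show (2:ℕ) = 1+1 from rfl,
    iteratedDeriv_succ, iteratedDeriv_one, deriv_pGUE]
  have h1 : deriv (PP1 n) = PP2 n := funext fun x => (hP1 n x).deriv
  rw [h1]
  exact funext fun x => (hP2 n x).deriv

lemma main_ode (n : ℕ) (x : ℝ) :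
    (1/4) * PP3 n x + (2*n - x^2) * PP1 n x + x * pGUE n x = 0 := by
  have hsum : (1/4) * PP3 n x + (2*n - x^2) * PP1 n x + x * pGUE n x
      = ∑ k ∈ Finset.range n, ((1/4) * Q3 k x + (2*n - x^2) * Q1 k x + x * hermiteFn k x^2) := by
    simp only [PP3, PP1, pGUE, Finset.mul_sum, Finset.sum_add_distrib]
  rw [hsum]
  have hterm : ∀ k ∈ Finset.range n,
      (1/4) * Q3 k x + (2*(n:ℝ) - x^2) * Q1 k x + x * hermiteFn k x^2
      = (fun k => (4*(n:ℝ) - 4*k) * (aa k * hermiteFn (k-1) x * hermiteFn k x)) k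
        - (fun k => (4*(n:ℝ) - 4*k) * (aa k * hermiteFn (k-1) x * hermiteFn k x)) (k+1) := by
    intro k _
    simp only [Q3, Q1, dH, Nat.add_sub_cancel]
    have h2 := xF k x
    push_cast
    linear_combination (2*hermiteFn k x)*h2
  rw [Finset.sum_congr rfl hterm, Finset.sum_range_sub']
  simp [aa_zero]

section scaling
variable (n : ℕ) (σ : ℝ)

lemma hVar0 (hσ : 0 < σ) (x : ℝ) :
    HasDerivAt (pGUEvar n σ) ((σ*Real.sqrt 2)⁻¹^2 * PP1 n (x/(σ*Real.sqrt 2))) x := by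
  set c := σ * Real.sqrt 2 with hcdef
  have hc : c ≠ 0 := by positivity
  have inner : HasDerivAt (fun y : ℝ => y / c) c⁻¹ x := by
    have := (hasDerivAt_id x).div_const c
    simpa using this
  have h := ((hP0 n (x/c)).comp x inner).const_mul c⁻¹
  have heq : (fun y : ℝ => c⁻¹ * (pGUE n ∘ fun y => y / c) y) = pGUEvar n σ := by
    funext y; rfl
  rw [heq] at h
  convert h using 1
  · rfl
  · rfl
  ring

lemma hVar1 (hσ : 0 < σ) (x : ℝ) :
    HasDerivAt (fun y => (σ*Real.sqrt 2)⁻¹^2 * PP1 n (y/(σ*Real.sqrt 2)))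
      ((σ*Real.sqrt 2)⁻¹^3 * PP2 n (x/(σ*Real.sqrt 2))) x := by
  set c := σ * Real.sqrt 2 with hcdef
  have hc : c ≠ 0 := by positivity
  have inner : HasDerivAt (fun y : ℝ => y / c) c⁻¹ x := by
    have := (hasDerivAt_id x).div_const c
    simpa using this
  have h := ((hP1 n (x/c)).comp x inner).const_mul (c⁻¹^2)
  convert h using 1
  · rfl
  · rfl
  · rfl
  ring

lemma hVar2 (hσ : 0 < σ) (x : ℝ) :
    HasDerivAt (fun y => (σ*Real.sqrt 2)⁻¹^3 * PP2 n (y/(σ*Real.sqrt 2)))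
      ((σ*Real.sqrt 2)⁻¹^4 * PP3 n (x/(σ*Real.sqrt 2))) x := by
  set c := σ * Real.sqrt 2 with hcdef
  have hc : c ≠ 0 := by positivity
  have inner : HasDerivAt (fun y : ℝ => y / c) c⁻¹ x := by
    have := (hasDerivAt_id x).div_const c
    simpa using this
  have h := ((hP2 n (x/c)).comp x inner).const_mul (c⁻¹^3)
  convert h using 1
  · rfl
  · rfl
  · rfl
  ring

lemma deriv_pGUEvar (hσ : 0 < σ) :
    deriv (pGUEvar n σ) = fun x => (σ*Real.sqrt 2)⁻¹^2 * PP1 n (x/(σ*Real.sqrt 2)) :=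
  funext fun x => (hVar0 n σ hσ x).deriv

lemma iteratedDeriv3_pGUEvar (hσ : 0 < σ) :
    iteratedDeriv 3 (pGUEvar n σ)
      = fun x => (σ*Real.sqrt 2)⁻¹^4 * PP3 n (x/(σ*Real.sqrt 2)) := by
  rw [show (3:ℕ) = 2+1 from rfl, iteratedDeriv_succ, show (2:ℕ) = 1+1 from rfl,
    iteratedDeriv_succ, iteratedDeriv_one, deriv_pGUEvar n σ hσ]
  have h1 : deriv (fun y => (σ*Real.sqrt 2)⁻¹^2 * PP1 n (y/(σ*Real.sqrt 2)))
      = fun x => (σ*Real.sqrt 2)⁻¹^3 * PP2 n (x/(σ*Real.sqrt 2)) :=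
    funext fun x => (hVar1 n σ hσ x).deriv
  rw [h1]
  exact funext fun x => (hVar2 n σ hσ x).deriv

end scaling


theorem gue_density_ode (n : ℕ) (hn : 1 ≤ n) (σ : ℝ) (hσ : 0 < σ) (x : ℝ) :
    ((1/4) * iteratedDeriv 3 (pGUE n) x + (2*n - x^2) * deriv (pGUE n) x + x * pGUE n x = 0) ∧
    (σ^4 * iteratedDeriv 3 (pGUEvar n σ) x + (4*n*σ^2 - x^2) * deriv (pGUEvar n σ) x
      + x * pGUEvar n σ x = 0) := by
  constructor
  · rw [iteratedDeriv3_pGUE, deriv_pGUE]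
    exact main_ode n x
  · rw [iteratedDeriv3_pGUEvar n σ hσ, deriv_pGUEvar n σ hσ]
    set c := σ * Real.sqrt 2 with hcdef
    have hc : c ≠ 0 := by positivity
    have hc2 : c^2 = 2*σ^2 := by
      rw [hcdef, mul_pow, sq_sqrt (by norm_num : (2:ℝ) ≥ 0)]; ring
    have hId := main_ode n (x/c)
    have hσ' : σ ≠ 0 := hσ.ne'
    have hc4 : c^4 = 4*σ^4 := by
      have : c^4 = (c^2)^2 := by ring
      rw [this, hc2]; ring
    have e3 : c⁻¹^4 = (4*σ^4)⁻¹ := by rw [inv_pow, hc4]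
    have e2 : c⁻¹^2 = (2*σ^2)⁻¹ := by rw [inv_pow, hc2]
    have hu2 : (x/c)^2 = x^2/(2*σ^2) := by rw [div_pow, hc2]
    simp only [pGUEvar, ← hcdef]
    rw [hu2] at hId
    rw [e3, e2, show x * (c⁻¹ * pGUE n (x/c)) = (x/c) * pGUE n (x/c) by
      rw [div_eq_mul_inv]; ring]
    generalize x/c = u at hId ⊢
    field_simp at hId ⊢
    linear_combination hId
end
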